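/- Let β be a nonzero algebraic integer with K = ℚ(β), and let N(β) denote the field norm of β from K to ℚ (a nonzero integer). Then {0, 1, …, |N(β)|−1} is a complete residue system of ℤ[β] modulo β·ℤ[β]: for every z ∈ ℤ[β] there exists exactly one integer r with 0 ≤ r < |N(β)| and z − r ∈ β·ℤ[β]. -/

import Mathlib

open Polynomial IntermediateField

theorem residue_system_mod_beta (K : Type*) [Field K] [NumberField K]
    (β : K) (hβ0 : β ≠ 0) (hβint : IsIntegral ℤ β)
    (hgen : IntermediateField.adjoin ℚ ({β} : Set K) = ⊤) :
    ∀ z ∈ Algebra.adjoin ℤ ({β} : Set K),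
      ∃! r : ℤ, 0 ≤ r ∧ (r : ℚ) < |Algebra.norm ℚ β| ∧
        ∃ w ∈ Algebra.adjoin ℤ ({β} : Set K), z - (r : K) = β * w := by
  intro z hz
  have hβQ : IsIntegral ℚ β := Algebra.IsIntegral.isIntegral β
  set p : ℤ[X] := minpoly ℤ β with hp
  have hmap : minpoly ℚ β = p.map (algebraMap ℤ ℚ) :=
    minpoly.isIntegrallyClosed_eq_field_fractions ℚ K hβint
  set A : ℤ := p.coeff 0 with hA
  -- power basis of K with generator β
  let e : ℚ⟮β⟯ ≃ₐ[ℚ] K :=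
    (IntermediateField.equivOfEq hgen).trans IntermediateField.topEquiv
  let pb : PowerBasis ℚ K := (IntermediateField.adjoin.powerBasis hβQ).map e
  have hgen' : pb.gen = β := rfl
  have hnorm : |Algebra.norm ℚ β| = |(A : ℚ)| := by
    have := Algebra.PowerBasis.norm_gen_eq_coeff_zero_minpoly pb
    rw [hgen', hmap] at this
    rw [this]
    simp [abs_mul, coeff_map]
    rfl
  have hA0 : A ≠ 0 := by
    intro h
    have h1 : Algebra.norm ℚ β = 0 := by
      have h2 := hnorm
      rw [h] at h2
      simpa [abs_eq_zero] using h2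
    exact hβ0 (Algebra.norm_eq_zero_iff.mp h1)
  set N : ℤ := |A| with hN
  have hNpos : 0 < N := abs_pos.mpr hA0
  have hNnorm : |Algebra.norm ℚ β| = (N : ℚ) := by
    rw [hnorm, hN]; simp [Int.cast_abs]
  have hadj : ∀ g : ℤ[X], aeval β g ∈ Algebra.adjoin ℤ ({β} : Set K) := by
    intro g
    rw [Algebra.adjoin_singleton_eq_range_aeval]
    exact ⟨g, rfl⟩
  -- key divisibility characterization
  have key : ∀ m : ℤ, (∃ w ∈ Algebra.adjoin ℤ ({β} : Set K), (m : K) = β * w) ↔ A ∣ m := by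
    intro m
    constructor
    · rintro ⟨w, hw, hwe⟩
      rw [Algebra.adjoin_singleton_eq_range_aeval] at hw
      obtain ⟨g, hg⟩ := hw
      have hg' : aeval β g = w := hg
      have hroot : aeval β (X * g - C m) = 0 := by
        simp [hg', hwe, eq_intCast]
      have hdvd : p ∣ X * g - C m := minpoly.isIntegrallyClosed_dvd hβint hroot
      obtain ⟨h, hh⟩ := hdvd
      have : -m = A * h.coeff 0 := by
        have := congrArg (fun q => q.coeff 0) hh
        simpa [mul_coeff_zero] using this
      exact ⟨-h.coeff 0, by linarith [this]⟩
    · rintro ⟨k, rfl⟩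
      -- A = β * aeval β (-p.divX)
      have hAexpr : (A : K) = β * aeval β (-p.divX) := by
        have h1 : p.divX * X + C A = p := p.divX_mul_X_add
        have h2 : aeval β p = 0 := minpoly.aeval ℤ β
        have h3 := congrArg (aeval β) h1
        rw [h2] at h3
        simp only [map_add, map_mul, aeval_X, aeval_C, map_intCast, eq_intCast] at h3
        rw [map_neg]
        linear_combination h3
      refine ⟨aeval β ((-p.divX) * C k), hadj _, ?_⟩
      push_cast
      rw [map_mul, aeval_C, hAexpr]
      simp only [eq_intCast]
      ring
  -- existence part data
  rw [Algebra.adjoin_singleton_eq_range_aeval] at hz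
  obtain ⟨f, hf⟩ := hz
  have hzf : aeval β f = z := hf
  set m : ℤ := f.coeff 0 with hm
  set r : ℤ := m % N with hr
  have hr0 : 0 ≤ r := Int.emod_nonneg m (ne_of_gt hNpos)
  have hrN : r < N := Int.emod_lt_of_pos m hNpos
  have hdvd1 : A ∣ m - r := by
    have : N ∣ m - r := ⟨m / N, by rw [hr, Int.emod_def]; ring⟩
    exact (abs_dvd A (m - r)).mp (hN ▸ this)
  obtain ⟨w2, hw2, hw2e⟩ := (key (m - r)).mpr hdvd1
  have hsplit : z - (m : K) = β * aeval β f.divX := by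
    have h1 : f.divX * X + C m = f := f.divX_mul_X_add
    have h3 := congrArg (aeval β) h1
    rw [hzf] at h3
    simp only [map_add, map_mul, aeval_X, aeval_C, map_intCast, eq_intCast] at h3
    linear_combination -h3
  have hex : z - (r : K) = β * (aeval β f.divX + w2) := by
    have h4 : z - (r : K) = (z - (m : K)) + ((m - r : ℤ) : K) := by
      push_cast; ring
    rw [h4, hsplit, hw2e]; ring
  refine ⟨r, ⟨hr0, by rw [hNnorm]; exact_mod_cast hrN, ?_⟩, ?_⟩
  · exact ⟨aeval β f.divX + w2, Subalgebra.add_mem _ (hadj _) hw2, hex⟩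
  · -- uniqueness
    rintro r' ⟨hr'0, hr'N, w', hw', hw'e⟩
    have hr'N' : r' < N := by
      rw [hNnorm] at hr'N; exact_mod_cast hr'N
    have hdiff : ((r - r' : ℤ) : K) = β * (w' - (aeval β f.divX + w2)) := by
      push_cast
      calc (r : K) - r' = (z - (r' : K)) - (z - (r : K)) := by ring
        _ = β * w' - β * (aeval β f.divX + w2) := by rw [hw'e, hex]
        _ = β * (w' - (aeval β f.divX + w2)) := by ring
    have hAd : A ∣ r - r' :=
      (key (r - r')).mp ⟨w' - (aeval β f.divX + w2),
        Subalgebra.sub_mem _ hw' (Subalgebra.add_mem _ (hadj _) hw2), hdiff⟩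
    have : r - r' = 0 :=
      Int.eq_zero_of_abs_lt_dvd ((abs_dvd A _).mpr hAd) (by rw [abs_lt]; omega)
    omega
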